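/- Information-geometric Helmholtz–Hodge–Kodaira decomposition: let Ψ* be a dissipation function on ℝ^E with conjugate Ψ, let S ∈ ℝ^{V×E}, and let (j,f) be a Legendre dual pair. Then: (i) there exists a unique j_eq ∈ ℝ^E such that S j_eq = S j and ∇Ψ(j_eq) ∈ Im Sᵀ, and j_eq is the unique minimizer of Ψ over the affine set {j' : S j' = S j}; in particular j − j_eq ∈ Ker S (divergence-free) and ∇Ψ(j_eq) ∈ Im Sᵀ (an equilibrium, curl-free force). (ii) Dually, there exists a unique f_st ∈ ℝ^E such that f − f_st ∈ Im Sᵀ and S ∇Ψ*(f_st) = 0, and f_st is the unique minimizer of Ψ* over the affine set {f'' : f'' − f ∈ Im Sᵀ}. -/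

import Mathlib

open Matrix Filter Set

noncomputable def grad {n : ℕ} (F : (Fin n → ℝ) → ℝ) (x : Fin n → ℝ) : Fin n → ℝ :=
  fun i => fderiv ℝ F x (Pi.single i 1)

def IsDissipation {n : ℕ} (Ψ : (Fin n → ℝ) → ℝ) : Prop :=
  StrictConvexOn ℝ Set.univ Ψ ∧ ContDiff ℝ 1 Ψ ∧
  Tendsto (fun f => Ψ f / ‖f‖) (Bornology.cobounded (Fin n → ℝ)) atTop ∧
  (∀ f, Ψ (-f) = Ψ f) ∧ Ψ 0 = 0

noncomputable def legendre {n : ℕ} (Ψ : (Fin n → ℝ) → ℝ) (j : Fin n → ℝ) : ℝ :=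
  ⨆ f : Fin n → ℝ, (j ⬝ᵥ f - Ψ f)

noncomputable def breg {n : ℕ} (F : (Fin n → ℝ) → ℝ) (x x' : Fin n → ℝ) : ℝ :=
  F x - F x' - (x - x') ⬝ᵥ grad F x'

def posOrth (n : ℕ) : Set (Fin n → ℝ) := {x | ∀ i, 0 < x i}

def IsThermo {n : ℕ} (Φ : (Fin n → ℝ) → ℝ) : Prop :=
  StrictConvexOn ℝ (posOrth n) Φ ∧
  (∀ x ∈ posOrth n, DifferentiableAt ℝ Φ x) ∧
  Set.BijOn (grad Φ) (posOrth n) Set.univ ∧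
  (∀ xin ∈ posOrth n, ∀ xbd ∈ frontier {x : Fin n → ℝ | ∀ i, 0 ≤ x i},
    Tendsto (fun lam : ℝ => deriv (fun l : ℝ => Φ (l • xin + (1 - l) • xbd)) lam)
      (nhdsWithin 0 (Set.Ioi 0)) atBot)

open Topology

namespace HHK
variable {n : ℕ}

noncomputable def dotCLM (j : Fin n → ℝ) : (Fin n → ℝ) →L[ℝ] ℝ :=
  ∑ i, j i • (ContinuousLinearMap.proj i : (Fin n → ℝ) →L[ℝ] ℝ)

@[simp] lemma dotCLM_apply (j v : Fin n → ℝ) : dotCLM j v = j ⬝ᵥ v := by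
  simp [dotCLM, dotProduct]

lemma clm_apply_eq_dot (L : (Fin n → ℝ) →L[ℝ] ℝ) (v : Fin n → ℝ) :
    L v = v ⬝ᵥ (fun i => L (Pi.single i 1)) := by
  have hv : v = ∑ i, v i • (Pi.single i 1 : Fin n → ℝ) := by
    funext k
    simp [Finset.sum_apply, Pi.single_apply]
  calc L v = L (∑ i, v i • (Pi.single i 1 : Fin n → ℝ)) := by rw [← hv]
    _ = ∑ i, v i * L (Pi.single i 1) := by
        rw [map_sum]; exact Finset.sum_congr rfl fun i _ => by rw [_root_.map_smul]; rfl
    _ = v ⬝ᵥ (fun i => L (Pi.single i 1)) := rfl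

lemma fderiv_apply_eq_dot (F : (Fin n → ℝ) → ℝ) (x v : Fin n → ℝ) :
    (fderiv ℝ F x) v = v ⬝ᵥ grad F x :=
  clm_apply_eq_dot (fderiv ℝ F x) v

lemma abs_dot_le (a b : Fin n → ℝ) : |a ⬝ᵥ b| ≤ ((n : ℝ) + 1) * (‖a‖ * ‖b‖) := by
  have h1 : |a ⬝ᵥ b| ≤ ∑ i, |a i| * |b i| := by
    refine (Finset.abs_sum_le_sum_abs _ _).trans ?_
    exact le_of_eq (Finset.sum_congr rfl fun i _ => abs_mul _ _)
  have h2 : ∀ i ∈ Finset.univ, |a i| * |b i| ≤ ‖a‖ * ‖b‖ := fun i _ =>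
    mul_le_mul (by simpa using norm_le_pi_norm a i) (by simpa using norm_le_pi_norm b i)
      (abs_nonneg _) (norm_nonneg _)
  have h3 : (∑ i, |a i| * |b i|) ≤ ∑ _i : Fin n, ‖a‖ * ‖b‖ := Finset.sum_le_sum h2
  have h4 : (∑ _i : Fin n, ‖a‖ * ‖b‖) = (n : ℝ) * (‖a‖ * ‖b‖) := by
    simp [Finset.sum_const, Finset.card_univ]
  have h5 : (n : ℝ) * (‖a‖ * ‖b‖) ≤ ((n : ℝ) + 1) * (‖a‖ * ‖b‖) := by
    have : (0:ℝ) ≤ ‖a‖ * ‖b‖ := by positivity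
    nlinarith
  linarith

lemma hasFDerivAt_dot (j x : Fin n → ℝ) : HasFDerivAt (fun w => j ⬝ᵥ w) (dotCLM j) x := by
  have h : (⇑(dotCLM j) : (Fin n → ℝ) → ℝ) = fun w => j ⬝ᵥ w := funext (dotCLM_apply j)
  exact h ▸ (dotCLM j).hasFDerivAt

lemma continuous_dot (j : Fin n → ℝ) : Continuous (fun w : Fin n → ℝ => j ⬝ᵥ w) :=
  (dotCLM j).continuous.congr (dotCLM_apply j)

lemma coercive_sub_dot {Ψ : (Fin n → ℝ) → ℝ}
    (hco : Tendsto (fun x => Ψ x / ‖x‖) (Bornology.cobounded _) atTop) (j : Fin n → ℝ) :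
    Tendsto (fun x => Ψ x - j ⬝ᵥ x) (Bornology.cobounded _) atTop := by
  rw [tendsto_atTop]
  intro M
  have h1 : ∀ᶠ x in Bornology.cobounded (Fin n → ℝ),
      ((n:ℝ)+1)*‖j‖ + max M 0 ≤ Ψ x / ‖x‖ := hco.eventually (eventually_ge_atTop _)
  have h2 : ∀ᶠ x in Bornology.cobounded (Fin n → ℝ), (1:ℝ) ≤ ‖x‖ :=
    eventually_cobounded_le_norm 1
  filter_upwards [h1, h2] with x hx1 hx2
  have hxpos : (0:ℝ) < ‖x‖ := lt_of_lt_of_le one_pos hx2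
  have hΨx : (((n:ℝ)+1)*‖j‖ + max M 0) * ‖x‖ ≤ Ψ x := by
    rw [← div_mul_cancel₀ (Ψ x) hxpos.ne']
    exact mul_le_mul_of_nonneg_right hx1 hxpos.le
  have hdot : j ⬝ᵥ x ≤ ((n:ℝ)+1)*‖j‖*‖x‖ := by
    have := abs_dot_le j x
    have := le_abs_self (j ⬝ᵥ x)
    nlinarith
  have hM : max M 0 * 1 ≤ max M 0 * ‖x‖ :=
    mul_le_mul_of_nonneg_left hx2 (le_max_right M 0)
  have : M ≤ max M 0 := le_max_left M 0
  nlinarith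

lemma exists_minOn_closed {F : (Fin n → ℝ) → ℝ} (hF : Continuous F)
    (hco : Tendsto F (Bornology.cobounded _) atTop) {C : Set (Fin n → ℝ)} (hC : IsClosed C)
    {c : Fin n → ℝ} (hc : c ∈ C) : ∃ x ∈ C, ∀ y ∈ C, F x ≤ F y := by
  obtain ⟨x, hx, hmin⟩ := hF.continuousOn.exists_isMinOn' hC hc
    (by
      have h := hco.eventually (eventually_ge_atTop (F c))
      rw [Metric.cobounded_eq_cocompact] at h
      exact h.filter_mono inf_le_left)
  exact ⟨x, hx, fun y hy => hmin hy⟩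

lemma grad_eq_of_max {Ψ : (Fin n → ℝ) → ℝ} (hΨ : Differentiable ℝ Ψ) {j g : Fin n → ℝ}
    (hmax : ∀ g', j ⬝ᵥ g' - Ψ g' ≤ j ⬝ᵥ g - Ψ g) : grad Ψ g = j := by
  have hmin : IsLocalMin (fun x => Ψ x - j ⬝ᵥ x) g :=
    Filter.Eventually.of_forall fun x => by have := hmax x; simp only []; linarith
  have hder : HasFDerivAt (fun x => Ψ x - j ⬝ᵥ x) (fderiv ℝ Ψ g - dotCLM j) g :=
    (hΨ g).hasFDerivAt.sub (hasFDerivAt_dot j g)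
  have hz := hmin.hasFDerivAt_eq_zero hder
  have hfd : fderiv ℝ Ψ g = dotCLM j := by rwa [sub_eq_zero] at hz
  funext i
  show (fderiv ℝ Ψ g) (Pi.single i 1) = j i
  rw [hfd, dotCLM_apply]
  simp

lemma exists_argmax {Ψ : (Fin n → ℝ) → ℝ} (hΨc : Continuous Ψ)
    (hco : Tendsto (fun x => Ψ x / ‖x‖) (Bornology.cobounded _) atTop) (j : Fin n → ℝ) :
    ∃ g, ∀ g', j ⬝ᵥ g' - Ψ g' ≤ j ⬝ᵥ g - Ψ g := by
  obtain ⟨x, -, hx⟩ := exists_minOn_closed (hΨc.sub (continuous_dot j))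
    (coercive_sub_dot hco j) isClosed_univ (mem_univ (0 : Fin n → ℝ))
  exact ⟨x, fun g' => by have := hx g' (mem_univ g'); simp only [Pi.sub_apply] at this; linarith⟩

lemma strict_subgrad {Ψ : (Fin n → ℝ) → ℝ} (hcv : StrictConvexOn ℝ univ Ψ)
    (hΨ : Differentiable ℝ Ψ) {x y : Fin n → ℝ} (hxy : x ≠ y) :
    Ψ x + (y - x) ⬝ᵥ grad Ψ x < Ψ y := by
  set c : ℝ → (Fin n → ℝ) := fun t => x + t • (y - x) with hc
  have hyx : y - x ≠ 0 := sub_ne_zero.mpr (Ne.symm hxy)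
  have hg : StrictConvexOn ℝ (univ : Set ℝ) (Ψ ∘ c) := by
    refine ⟨convex_univ, ?_⟩
    intro s _ t _ hst a b ha hb hab
    have hpq : x + s • (y - x) ≠ x + t • (y - x) := by
      intro hEq
      exact hst (smul_left_injective ℝ hyx (add_left_cancel hEq))
    have key := hcv.2 (mem_univ (x + s • (y-x))) (mem_univ (x + t • (y-x))) hpq ha hb hab
    have hx1 : a • x + b • x = x := by rw [← add_smul, hab, one_smul]
    have harg : a • (x + s • (y-x)) + b • (x + t • (y-x)) = x + (a*s + b*t) • (y-x) := by
      calc a • (x + s • (y-x)) + b • (x + t • (y-x))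
          = (a • x + b • x) + ((a*s) • (y-x) + (b*t) • (y-x)) := by
            rw [smul_add, smul_add, smul_smul, smul_smul]; abel
        _ = x + (a*s + b*t) • (y-x) := by rw [hx1, add_smul]
    rw [harg] at key
    simpa [hc, Function.comp, smul_eq_mul] using key
  have hc0 : c 0 = x := by simp [hc]
  have hc1 : c 1 = y := by simp [hc]
  have hder : HasDerivAt (Ψ ∘ c) ((y - x) ⬝ᵥ grad Ψ x) 0 := by
    have h1 : HasDerivAt c (y - x) 0 := by
      exact (by simpa using ((hasDerivAt_id (0:ℝ)).smul_const (y - x)) :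
        HasDerivAt (fun t : ℝ => t • (y - x)) (y - x) 0).const_add x
    have h2 := (hΨ (c 0)).hasFDerivAt.comp_hasDerivAt 0 h1
    rw [hc0] at h2
    rwa [fderiv_apply_eq_dot] at h2
  have hslope := hg.lt_slope_of_hasDerivAt (mem_univ (0:ℝ)) (mem_univ (1:ℝ)) one_pos hder
  rw [slope_def_field] at hslope
  simp only [Function.comp, hc0, hc1] at hslope
  have heq : ((Ψ y - Ψ x) / (1 - 0)) = Ψ y - Ψ x := by norm_num
  rw [heq] at hslope
  linarith

lemma strict_mono_grad {Ψ : (Fin n → ℝ) → ℝ} (hcv : StrictConvexOn ℝ univ Ψ)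
    (hΨ : Differentiable ℝ Ψ) {x y : Fin n → ℝ} (hxy : x ≠ y) :
    0 < (y - x) ⬝ᵥ (grad Ψ y - grad Ψ x) := by
  have h1 := strict_subgrad hcv hΨ hxy
  have h2 := strict_subgrad hcv hΨ hxy.symm
  have h3 : (x - y) ⬝ᵥ grad Ψ y = -((y - x) ⬝ᵥ grad Ψ y) := by
    rw [← neg_dotProduct, neg_sub]
  rw [dotProduct_sub]
  linarith

lemma grad_inj {Ψ : (Fin n → ℝ) → ℝ} (hcv : StrictConvexOn ℝ univ Ψ)
    (hΨ : Differentiable ℝ Ψ) {x y : Fin n → ℝ} (hg : grad Ψ x = grad Ψ y) : x = y := by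
  by_contra hne
  have := strict_mono_grad hcv hΨ hne
  rw [hg, sub_self, dotProduct_zero] at this
  exact lt_irrefl 0 this

lemma grad_continuous {Ψ : (Fin n → ℝ) → ℝ} (hd : ContDiff ℝ 1 Ψ) : Continuous (grad Ψ) :=
  continuous_pi fun i => (hd.continuous_fderiv one_ne_zero).clm_apply continuous_const

lemma dot_grad_eq_zero_of_min {F : (Fin n → ℝ) → ℝ} (hF : Differentiable ℝ F)
    {C : Set (Fin n → ℝ)} {x : Fin n → ℝ} (hx : ∀ y ∈ C, F x ≤ F y)
    {d : Fin n → ℝ} (hd : ∀ t : ℝ, x + t • d ∈ C) : d ⬝ᵥ grad F x = 0 := by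
  have hpath : HasDerivAt (fun t : ℝ => x + t • d) d 0 := by
    simpa using ((hasDerivAt_id (0:ℝ)).smul_const d).const_add x
  have hcomp : HasDerivAt (F ∘ fun t : ℝ => x + t • d) (fderiv ℝ F x d) 0 := by
    have h2 := (hF (x + (0:ℝ) • d)).hasFDerivAt.comp_hasDerivAt 0 hpath
    simpa using h2
  have hmin : IsLocalMin (F ∘ fun t : ℝ => x + t • d) 0 :=
    Filter.Eventually.of_forall fun t => by
      simpa [Function.comp] using hx _ (hd t)
  have := hmin.hasDerivAt_eq_zero hcomp
  rwa [fderiv_apply_eq_dot] at this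

lemma grad_sub_dot {Ψ : (Fin n → ℝ) → ℝ} (hΨ : Differentiable ℝ Ψ) (j x : Fin n → ℝ) :
    grad (fun w => Ψ w - j ⬝ᵥ w) x = grad Ψ x - j := by
  have hF : HasFDerivAt (fun w => Ψ w - j ⬝ᵥ w) (fderiv ℝ Ψ x - dotCLM j) x :=
    (hΨ x).hasFDerivAt.sub (hasFDerivAt_dot j x)
  funext i
  show (fderiv ℝ (fun w => Ψ w - j ⬝ᵥ w) x) (Pi.single i 1) = (grad Ψ x - j) i
  rw [hF.fderiv]
  simp [grad]

lemma transpose_dot {V E : ℕ} (S : Matrix (Fin V) (Fin E) ℝ) (u : Fin V → ℝ) (x : Fin E → ℝ) :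
    (Sᵀ *ᵥ u) ⬝ᵥ x = u ⬝ᵥ (S *ᵥ x) := by
  rw [Matrix.mulVec_transpose, ← Matrix.dotProduct_mulVec]

section legendreLemmas
variable {Ψ : (Fin n → ℝ) → ℝ} {G : (Fin n → ℝ) → (Fin n → ℝ)}
  (hGmax : ∀ j g, j ⬝ᵥ g - Ψ g ≤ j ⬝ᵥ G j - Ψ (G j))

include hGmax

lemma legendre_eq (j : Fin n → ℝ) : legendre Ψ j = j ⬝ᵥ G j - Ψ (G j) := by
  refine le_antisymm (ciSup_le (hGmax j)) ?_
  exact le_ciSup ⟨j ⬝ᵥ G j - Ψ (G j), by rintro y ⟨g, rfl⟩; exact hGmax j g⟩ (G j)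

lemma legendre_ge (j g : Fin n → ℝ) : j ⬝ᵥ g - Ψ g ≤ legendre Ψ j := by
  rw [legendre_eq hGmax]; exact hGmax j g

variable (hcv : StrictConvexOn ℝ univ Ψ) (hd : ContDiff ℝ 1 Ψ)
  (hco : Tendsto (fun x => Ψ x / ‖x‖) (Bornology.cobounded _) atTop)
  (hΨ0 : Ψ 0 = 0)
  (hGgrad : ∀ j, grad Ψ (G j) = j)

include hΨ0 hco in
lemma G_local_bound (j₀ : Fin n → ℝ) :
    ∃ R : ℝ, ∀ j ∈ Metric.ball j₀ 1, ‖G j‖ ≤ R := by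
  set c : ℝ := ((n:ℝ)+1) * (‖j₀‖ + 1) with hcdef
  have hcnn : 0 ≤ c := by positivity
  have hmem : {x : Fin n → ℝ | c + 1 ≤ Ψ x / ‖x‖} ∈ Bornology.cobounded (Fin n → ℝ) :=
    hco.eventually (eventually_ge_atTop _)
  obtain ⟨r, -, hr⟩ := (Filter.hasBasis_cobounded_norm (E := Fin n → ℝ)).mem_iff.mp hmem
  refine ⟨max r 1, fun j hj => ?_⟩
  by_contra hbig
  push_neg at hbig
  have hGr : r ≤ ‖G j‖ := le_trans (le_max_left r 1) hbig.le
  have hG1 : (1:ℝ) < ‖G j‖ := lt_of_le_of_lt (le_max_right r 1) hbig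
  have hdiv : c + 1 ≤ Ψ (G j) / ‖G j‖ := hr hGr
  have hGpos : (0:ℝ) < ‖G j‖ := lt_trans one_pos hG1
  have hΨlb : (c + 1) * ‖G j‖ ≤ Ψ (G j) := by
    rw [← div_mul_cancel₀ (Ψ (G j)) hGpos.ne']
    exact mul_le_mul_of_nonneg_right hdiv hGpos.le
  have hub0 : Ψ (G j) ≤ j ⬝ᵥ G j := by
    have := hGmax j 0
    simp [hΨ0] at this
    linarith
  have hjnorm : ‖j‖ ≤ ‖j₀‖ + 1 := by
    have h1 : dist j j₀ < 1 := Metric.mem_ball.mp hj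
    calc ‖j‖ = ‖j₀ + (j - j₀)‖ := by ring_nf
      _ ≤ ‖j₀‖ + ‖j - j₀‖ := norm_add_le _ _
      _ ≤ ‖j₀‖ + 1 := by rw [← dist_eq_norm] at *; linarith
  have hdub : j ⬝ᵥ G j ≤ c * ‖G j‖ := by
    have h1 := le_trans (le_abs_self _) (abs_dot_le j (G j))
    have h2 : ((n:ℝ)+1) * (‖j‖ * ‖G j‖) ≤ c * ‖G j‖ := by
      calc ((n:ℝ)+1) * (‖j‖ * ‖G j‖) ≤ ((n:ℝ)+1) * ((‖j₀‖+1) * ‖G j‖) := by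
            refine mul_le_mul_of_nonneg_left ?_ (by positivity)
            exact mul_le_mul_of_nonneg_right hjnorm (norm_nonneg _)
        _ = c * ‖G j‖ := by rw [hcdef]; ring
    linarith
  nlinarith

include hcv hd hco hΨ0 hGgrad in
lemma G_tendsto (j₀ : Fin n → ℝ) : Tendsto G (𝓝 j₀) (𝓝 (G j₀)) := by
  have hΨdiff : Differentiable ℝ Ψ := hd.differentiable one_ne_zero
  rw [Metric.tendsto_nhds]
  intro ε hε
  obtain ⟨R, hR⟩ := G_local_bound hGmax hco hΨ0 j₀
  set C : Set (Fin n → ℝ) :=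
    Metric.closedBall 0 R ∩ {g | ε ≤ dist g (G j₀)} with hCdef
  have hCclosed : IsClosed C :=
    Metric.isClosed_closedBall.inter
      (isClosed_le continuous_const (continuous_id.dist continuous_const))
  have hCc : IsCompact C :=
    (isCompact_closedBall (0 : Fin n → ℝ) R).of_isClosed_subset hCclosed inter_subset_left
  have hDc : IsCompact (grad Ψ '' C) := hCc.image (grad_continuous hd)
  have hj₀D : j₀ ∈ (grad Ψ '' C)ᶜ := by
    rintro ⟨g, ⟨-, hgdist⟩, hgeq⟩
    have hgG : g = G j₀ := grad_inj hcv hΨdiff (hgeq.trans (hGgrad j₀).symm)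
    have hd2 : ε ≤ dist g (G j₀) := hgdist
    rw [hgG, dist_self] at hd2
    exact absurd hd2 (not_le.mpr hε)
  obtain ⟨δ, hδpos, hδ⟩ := Metric.isOpen_iff.mp hDc.isClosed.isOpen_compl j₀ hj₀D
  have hball : Metric.ball j₀ (min δ 1) ∈ 𝓝 j₀ :=
    Metric.ball_mem_nhds _ (lt_min hδpos one_pos)
  filter_upwards [hball] with jj hjj
  by_contra hcon
  push_neg at hcon
  have h1 : jj ∈ Metric.ball j₀ 1 :=
    Metric.ball_subset_ball (min_le_right δ 1) hjj
  have h2 : G jj ∈ C :=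
    ⟨Metric.mem_closedBall.mpr (by simpa [dist_eq_norm] using hR jj h1), hcon⟩
  have h3 : grad Ψ (G jj) ∈ grad Ψ '' C := mem_image_of_mem _ h2
  rw [hGgrad jj] at h3
  exact hδ (Metric.ball_subset_ball (min_le_left δ 1) hjj) h3

include hcv hd hco hΨ0 hGgrad in
lemma legendre_hasFDerivAt (j₀ : Fin n → ℝ) :
    HasFDerivAt (legendre Ψ) (dotCLM (G j₀)) j₀ := by
  rw [hasFDerivAt_iff_isLittleO, Asymptotics.isLittleO_iff]
  intro c hc
  have hG := G_tendsto hGmax hcv hd hco hΨ0 hGgrad j₀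
  have hcn : (0:ℝ) < c / ((n:ℝ)+1) := by positivity
  have hev : ∀ᶠ jj in 𝓝 j₀, dist (G jj) (G j₀) < c / ((n:ℝ)+1) :=
    (Metric.tendsto_nhds.mp hG) _ hcn
  filter_upwards [hev] with jj hjj
  set A : ℝ := legendre Ψ jj - legendre Ψ j₀ - dotCLM (G j₀) (jj - j₀) with hA
  have hdca : dotCLM (G j₀) (jj - j₀) = (jj - j₀) ⬝ᵥ G j₀ := by
    rw [dotCLM_apply, dotProduct_comm]
  have heq0 : legendre Ψ j₀ = j₀ ⬝ᵥ G j₀ - Ψ (G j₀) := legendre_eq hGmax j₀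
  have heqj : legendre Ψ jj = jj ⬝ᵥ G jj - Ψ (G jj) := legendre_eq hGmax jj
  have hge1 : jj ⬝ᵥ G j₀ - Ψ (G j₀) ≤ legendre Ψ jj := legendre_ge hGmax jj (G j₀)
  have hge2 : j₀ ⬝ᵥ G jj - Ψ (G jj) ≤ legendre Ψ j₀ := legendre_ge hGmax j₀ (G jj)
  have hsub1 : (jj - j₀) ⬝ᵥ G j₀ = jj ⬝ᵥ G j₀ - j₀ ⬝ᵥ G j₀ := sub_dotProduct _ _ _
  have hsub2 : (jj - j₀) ⬝ᵥ G jj = jj ⬝ᵥ G jj - j₀ ⬝ᵥ G jj := sub_dotProduct _ _ _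
  have hlow : 0 ≤ A := by rw [hA, hdca]; linarith
  have hup : A ≤ (jj - j₀) ⬝ᵥ (G jj - G j₀) := by
    rw [hA, hdca, dotProduct_sub]; linarith
  have hbound : (jj - j₀) ⬝ᵥ (G jj - G j₀) ≤ c * ‖jj - j₀‖ := by
    have h1 := le_trans (le_abs_self _) (abs_dot_le (jj - j₀) (G jj - G j₀))
    have h2 : ‖G jj - G j₀‖ < c / ((n:ℝ)+1) := by rwa [dist_eq_norm] at hjj
    have h3 : ((n:ℝ)+1) * (‖jj - j₀‖ * ‖G jj - G j₀‖) ≤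
        ((n:ℝ)+1) * (‖jj - j₀‖ * (c / ((n:ℝ)+1))) := by
      have hnn : (0:ℝ) ≤ ‖jj - j₀‖ := norm_nonneg _
      exact mul_le_mul_of_nonneg_left (mul_le_mul_of_nonneg_left h2.le hnn) (by positivity)
    have h4 : ((n:ℝ)+1) * (‖jj - j₀‖ * (c / ((n:ℝ)+1))) = c * ‖jj - j₀‖ := by
      field_simp
    linarith
  have hfin : ‖A‖ ≤ c * ‖jj - j₀‖ := by
    rw [Real.norm_eq_abs, abs_le]
    constructor
    · have : (0:ℝ) ≤ c * ‖jj - j₀‖ := by positivity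
      linarith
    · linarith
  simpa [hA] using hfin

include hcv hd hco hΨ0 hGgrad in
lemma grad_legendre (j₀ : Fin n → ℝ) : grad (legendre Ψ) j₀ = G j₀ := by
  have h := (legendre_hasFDerivAt hGmax hcv hd hco hΨ0 hGgrad j₀).fderiv
  funext i
  show (fderiv ℝ (legendre Ψ) j₀) (Pi.single i 1) = G j₀ i
  rw [h, dotCLM_apply]
  simp

end legendreLemmas
end HHK

/-- Information-geometric Helmholtz–Hodge–Kodaira decomposition: unique
equilibrium flux j_eq with S j_eq = S j and ∇Ψ(j_eq) ∈ Im Sᵀ, which is the unique minimizer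
of Ψ on the iso-velocity class; dually, a unique steady force f_st with f − f_st ∈ Im Sᵀ and
S ∇Ψ*(f_st) = 0, the unique minimizer of Ψ* on the iso-force class. -/
theorem information_geometric_HHK_decomposition {V E : ℕ}
    (S : Matrix (Fin V) (Fin E) ℝ)
    (Ψstar : (Fin E → ℝ) → ℝ) (h : IsDissipation Ψstar)
    (j f : Fin E → ℝ) (hpair : j = grad Ψstar f) :
    (∃ jeq : Fin E → ℝ,
      (S *ᵥ jeq = S *ᵥ j ∧ (∃ u, grad (legendre Ψstar) jeq = Sᵀ *ᵥ u)) ∧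
      (∀ j' : Fin E → ℝ,
        (S *ᵥ j' = S *ᵥ j ∧ (∃ u, grad (legendre Ψstar) j' = Sᵀ *ᵥ u)) → j' = jeq) ∧
      (∀ j' : Fin E → ℝ, S *ᵥ j' = S *ᵥ j → j' ≠ jeq →
        legendre Ψstar jeq < legendre Ψstar j')) ∧
    (∃ fst : Fin E → ℝ,
      ((∃ u, f - fst = Sᵀ *ᵥ u) ∧ S *ᵥ grad Ψstar fst = 0) ∧
      (∀ f' : Fin E → ℝ,
        ((∃ u, f - f' = Sᵀ *ᵥ u) ∧ S *ᵥ grad Ψstar f' = 0) → f' = fst) ∧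
      (∀ f'' : Fin E → ℝ, (∃ u, f'' - f = Sᵀ *ᵥ u) → f'' ≠ fst →
        Ψstar fst < Ψstar f'')) := by
  obtain ⟨hcv, hd, hco, hsym, h0⟩ := h
  have hΨdiff : Differentiable ℝ Ψstar := hd.differentiable one_ne_zero
  choose G hGmax using fun jv => HHK.exists_argmax hd.continuous hco jv
  have hGgrad : ∀ jv, grad Ψstar (G jv) = jv := fun jv => HHK.grad_eq_of_max hΨdiff (hGmax jv)
  set Wset : Set (Fin E → ℝ) := {w | ∃ u, w = Sᵀ *ᵥ u} with hWsetdef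
  have hWclosed : IsClosed Wset := by
    have hWeq : Wset = ↑(LinearMap.range (Matrix.mulVecLin Sᵀ)) := by
      ext w
      simp [hWsetdef, LinearMap.mem_range, Matrix.mulVecLin_apply, Matrix.mulVec_transpose, eq_comm]
    rw [hWeq]
    exact Submodule.closed_of_finiteDimensional _
  constructor
  · -- Part (i)
    have hF1cont : Continuous (fun w => Ψstar w - j ⬝ᵥ w) :=
      hd.continuous.sub (HHK.continuous_dot j)
    have hF1diff : Differentiable ℝ (fun w => Ψstar w - j ⬝ᵥ w) :=
      fun x => ((hΨdiff x).sub (HHK.hasFDerivAt_dot j x).differentiableAt)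
    have h0W : (0 : Fin E → ℝ) ∈ Wset := ⟨0, (Matrix.mulVec_zero _).symm⟩
    obtain ⟨w0, hw0W, hw0min⟩ := HHK.exists_minOn_closed hF1cont
      (HHK.coercive_sub_dot hco j) hWclosed h0W
    obtain ⟨u0, hu0⟩ := hw0W
    have hfirst : S *ᵥ grad Ψstar w0 = S *ᵥ j := by
      refine dotProduct_eq _ _ fun v => ?_
      have hdir : (Sᵀ *ᵥ v) ⬝ᵥ grad (fun w => Ψstar w - j ⬝ᵥ w) w0 = 0 :=
        HHK.dot_grad_eq_zero_of_min hF1diff hw0min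
          (fun t => ⟨u0 + t • v, by rw [Matrix.mulVec_add, Matrix.mulVec_smul, ← hu0]⟩)
      rw [HHK.grad_sub_dot hΨdiff, dotProduct_sub, HHK.transpose_dot, HHK.transpose_dot]
        at hdir
      rw [dotProduct_comm (S *ᵥ grad Ψstar w0) v, dotProduct_comm (S *ᵥ j) v]
      linarith
    set jeq := grad Ψstar w0 with hjeqdef
    have hGjeq : G jeq = w0 := HHK.grad_inj hcv hΨdiff ((hGgrad jeq).trans hjeqdef)
    have hgradL : ∀ j', grad (legendre Ψstar) j' = G j' := fun j' =>
      HHK.grad_legendre hGmax hcv hd hco h0 hGgrad j'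
    refine ⟨jeq, ⟨hfirst, ⟨u0, by rw [hgradL jeq, hGjeq]; exact hu0⟩⟩, ?_, ?_⟩
    · rintro j' ⟨hSj', u, hu⟩
      rw [hgradL j'] at hu
      have hj' : grad Ψstar (Sᵀ *ᵥ u) = j' := by rw [← hu]; exact hGgrad j'
      have hweq : Sᵀ *ᵥ u = w0 := by
        by_contra hne
        have hmono := HHK.strict_mono_grad hcv hΨdiff hne
        have he1 : w0 - Sᵀ *ᵥ u = Sᵀ *ᵥ (u0 - u) := by
          rw [Matrix.mulVec_sub, ← hu0]
        have he2 : S *ᵥ (jeq - j') = 0 := by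
          rw [Matrix.mulVec_sub, hfirst, hSj', sub_self]
        have hz : (w0 - Sᵀ *ᵥ u) ⬝ᵥ (jeq - j') = 0 := by
          rw [he1, HHK.transpose_dot, he2, dotProduct_zero]
        rw [hj'] at hmono
        linarith
      rw [← hj', hweq]
    · intro j'' hSj'' hne
      have hle : legendre Ψstar jeq = jeq ⬝ᵥ w0 - Ψstar w0 := by
        rw [HHK.legendre_eq hGmax jeq, hGjeq]
      have hge : j'' ⬝ᵥ w0 - Ψstar w0 ≤ legendre Ψstar j'' := HHK.legendre_ge hGmax j'' w0
      have hdot0 : (j'' - jeq) ⬝ᵥ w0 = 0 := by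
        rw [dotProduct_comm, hu0, HHK.transpose_dot, Matrix.mulVec_sub, hSj'', hfirst,
          sub_self, dotProduct_zero]
      have hsub : (j'' - jeq) ⬝ᵥ w0 = j'' ⬝ᵥ w0 - jeq ⬝ᵥ w0 := sub_dotProduct _ _ _
      by_contra hnotlt
      push_neg at hnotlt
      have hkey : ∀ g, j'' ⬝ᵥ g - Ψstar g ≤ j'' ⬝ᵥ w0 - Ψstar w0 := by
        intro g
        have h1 := HHK.legendre_ge hGmax j'' g
        linarith
      have hgw : grad Ψstar w0 = j'' := HHK.grad_eq_of_max hΨdiff hkey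
      exact hne (hjeqdef.trans hgw).symm
  · -- Part (ii)
    set C2 : Set (Fin E → ℝ) := {f' | ∃ u, f - f' = Sᵀ *ᵥ u} with hC2def
    have hC2closed : IsClosed C2 := by
      have hpre : C2 = (fun f' => f - f') ⁻¹' Wset := by
        ext f'; simp [hC2def, hWsetdef]
      rw [hpre]
      exact hWclosed.preimage (continuous_const.sub continuous_id)
    have hfC2 : f ∈ C2 := ⟨0, by rw [Matrix.mulVec_zero, sub_self]⟩
    have hcoΨ : Tendsto Ψstar (Bornology.cobounded _) atTop := by
      have hz := HHK.coercive_sub_dot hco (0 : Fin E → ℝ)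
      simpa using hz
    obtain ⟨fst, hfstC, hfstmin⟩ := HHK.exists_minOn_closed hd.continuous hcoΨ hC2closed hfC2
    obtain ⟨u0', hu0'⟩ := hfstC
    have hSfst : S *ᵥ grad Ψstar fst = 0 := by
      refine dotProduct_eq_zero _ fun v => ?_
      have hdir : (Sᵀ *ᵥ v) ⬝ᵥ grad Ψstar fst = 0 :=
        HHK.dot_grad_eq_zero_of_min hΨdiff hfstmin
          (fun t => ⟨u0' - t • v, by
            rw [Matrix.mulVec_sub, Matrix.mulVec_smul, ← hu0']; abel⟩)
      rw [HHK.transpose_dot] at hdir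
      rw [dotProduct_comm]
      exact hdir
    refine ⟨fst, ⟨⟨u0', hu0'⟩, hSfst⟩, ?_, ?_⟩
    · rintro f' ⟨⟨u', hu'⟩, hSf'⟩
      by_contra hne
      have hmono := HHK.strict_mono_grad hcv hΨdiff hne
      have he1 : fst - f' = Sᵀ *ᵥ (u' - u0') := by
        rw [Matrix.mulVec_sub, ← hu', ← hu0']; abel
      have hz : (fst - f') ⬝ᵥ (grad Ψstar fst - grad Ψstar f') = 0 := by
        rw [he1, HHK.transpose_dot, Matrix.mulVec_sub, hSfst, hSf', sub_self, dotProduct_zero]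
      linarith
    · intro f'' hex hne
      obtain ⟨u'', hu''⟩ := hex
      have he1 : f'' - fst = Sᵀ *ᵥ (u'' + u0') := by
        rw [Matrix.mulVec_add, ← hu'', ← hu0']; abel
      have hsg := HHK.strict_subgrad hcv hΨdiff (Ne.symm hne)
      have hz : (f'' - fst) ⬝ᵥ grad Ψstar fst = 0 := by
        rw [he1, HHK.transpose_dot, hSfst, dotProduct_zero]
      linarith
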